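/- If k ∈ ℕ with k ≥ 1, then the packing of k² unit circles centered at the points of the grid {2i : 0 ≤ i < k} × {2j : 0 ≤ j < k} is totally separable and has exactly 2k(k−1) = 2(n − √n) tangencies, where n = k². -/

import Mathlib

open EuclideanSpace Metric Finset
open scoped Classical

noncomputable section

/-- The tangent hyperplane to a pair of touching unit spheres centered at `x` and `y`:
the hyperplane through the midpoint `(x+y)/2` perpendicular to `x - y`. -/
def tangentHyp {d : ℕ} (x y : EuclideanSpace ℝ (Fin d)) : Set (EuclideanSpace ℝ (Fin d)) :=
  {p | (inner ℝ (p - midpoint ℝ x y) (x - y) : ℝ) = 0}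

/-- A set of centers forms a packing of unit spheres: pairwise distances are at least 2. -/
def IsPacking {d : ℕ} (S : Set (EuclideanSpace ℝ (Fin d))) : Prop :=
  S.Pairwise fun x y => 2 ≤ dist x y

/-- A packing is totally separable if every tangent hyperplane of a touching pair avoids the
open unit ball about every center. -/
def TotallySeparable {d : ℕ} (S : Set (EuclideanSpace ℝ (Fin d))) : Prop :=
  ∀ x ∈ S, ∀ y ∈ S, dist x y = 2 → ∀ z ∈ S, tangentHyp x y ∩ ball z 1 = ∅

/-- The number of tangencies (unordered pairs of centers at distance exactly 2)
of a finite packing. -/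
def tangencies {d : ℕ} (S : Finset (EuclideanSpace ℝ (Fin d))) : ℕ :=
  (S.offDiag.filter fun p => dist p.1 p.2 = 2).card / 2


def pt (a b : ℕ) : EuclideanSpace ℝ (Fin 2) :=
  (WithLp.equiv 2 (Fin 2 → ℝ)).symm ![2 * (a : ℝ), 2 * (b : ℝ)]

lemma pt_apply0 (a b : ℕ) : pt a b 0 = 2 * a := by
  simp [pt]

lemma pt_apply1 (a b : ℕ) : pt a b 1 = 2 * b := by
  simp [pt]

lemma dist_pt (a b c d : ℕ) : dist (pt a b) (pt c d)
    = Real.sqrt ((2*(a:ℝ) - 2*c)^2 + (2*(b:ℝ) - 2*d)^2) := by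
  rw [EuclideanSpace.dist_eq]
  congr 1
  simp [Fin.sum_univ_two, pt_apply0, pt_apply1, Real.dist_eq, sq_abs]

lemma sq_int (u v : ℤ) (h : u^2 + v^2 = 1) :
    (u = 0 ∧ (v = 1 ∨ v = -1)) ∨ (v = 0 ∧ (u = 1 ∨ u = -1)) := by
  have hu1 : u ≤ 1 := by nlinarith [sq_nonneg v]
  have hu2 : -1 ≤ u := by nlinarith [sq_nonneg v]
  have hv1 : v ≤ 1 := by nlinarith [sq_nonneg u]
  have hv2 : -1 ≤ v := by nlinarith [sq_nonneg u]
  interval_cases u <;> interval_cases v <;> omega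

def Adj (q : (ℕ × ℕ) × (ℕ × ℕ)) : Prop :=
  (q.1.1 = q.2.1 ∧ (q.1.2 = q.2.2 + 1 ∨ q.2.2 = q.1.2 + 1)) ∨
  (q.1.2 = q.2.2 ∧ (q.1.1 = q.2.1 + 1 ∨ q.2.1 = q.1.1 + 1))

lemma dist_pt_eq_two (a b c d : ℕ) :
    dist (pt a b) (pt c d) = 2 ↔ Adj ((a,b),(c,d)) := by
  rw [dist_pt]
  have hnn : (0:ℝ) ≤ (2*(a:ℝ) - 2*c)^2 + (2*(b:ℝ) - 2*d)^2 := by positivity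
  have h4 : Real.sqrt ((2*(a:ℝ) - 2*c)^2 + (2*(b:ℝ) - 2*d)^2) = 2 ↔
      (2*(a:ℝ) - 2*c)^2 + (2*(b:ℝ) - 2*d)^2 = 4 := by
    constructor
    · intro h
      have h2 := Real.sq_sqrt hnn
      rw [h] at h2; linarith
    · intro h
      rw [h, show (4:ℝ) = 2^2 by norm_num, Real.sqrt_sq (by norm_num : (0:ℝ) ≤ 2)]
  rw [h4]
  have key : (2*(a:ℝ) - 2*c)^2 + (2*(b:ℝ) - 2*d)^2 = 4 ↔
      ((a:ℤ) - c)^2 + ((b:ℤ) - d)^2 = 1 := by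
    rw [show ((2*(a:ℝ) - 2*c)^2 + (2*(b:ℝ) - 2*d)^2)
        = 4 * ((((a:ℤ) - c)^2 + ((b:ℤ) - d)^2 : ℤ) : ℝ) by push_cast; ring]
    constructor
    · intro h
      have : ((((a:ℤ) - c)^2 + ((b:ℤ) - d)^2 : ℤ) : ℝ) = 1 := by linarith
      exact_mod_cast this
    · intro h; rw [h]; norm_num
  rw [key]
  show _ ↔ ((a = c ∧ (b = d + 1 ∨ d = b + 1)) ∨ (b = d ∧ (a = c + 1 ∨ c = a + 1)))
  constructor
  · intro h
    rcases sq_int _ _ h with ⟨h1, h2⟩ | ⟨h1, h2⟩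
    · exact Or.inl (by constructor <;> omega)
    · exact Or.inr (by constructor <;> omega)
  · rintro (⟨h1, h2⟩ | ⟨h1, h2⟩) <;>
      [(have : (a:ℤ) - c = 0 ∧ (((b:ℤ) - d = 1) ∨ ((b:ℤ) - d = -1)) := by omega);
       (have : (b:ℤ) - d = 0 ∧ (((a:ℤ) - c = 1) ∨ ((a:ℤ) - c = -1)) := by omega)] <;>
    · obtain ⟨e1, e2⟩ := this
      rcases e2 with e2 | e2 <;> rw [e1, e2] <;> ring

lemma coord_le (x y : EuclideanSpace ℝ (Fin 2)) (i : Fin 2) : |x i - y i| ≤ dist x y := by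
  rw [EuclideanSpace.dist_eq, ← Real.sqrt_sq_eq_abs]
  apply Real.sqrt_le_sqrt
  rw [show (x i - y i)^2 = dist (x i) (y i)^2 by rw [Real.dist_eq, sq_abs]]
  exact Finset.single_le_sum (f := fun j => dist (x j) (y j) ^ 2)
    (fun j _ => sq_nonneg _) (Finset.mem_univ i)

lemma pt_inj_pair {a b c d : ℕ} (h : pt a b = pt c d) : a = c ∧ b = d := by
  have h0 := congrFun (congrArg (WithLp.equiv 2 (Fin 2 → ℝ)) h) 0
  have h1 := congrFun (congrArg (WithLp.equiv 2 (Fin 2 → ℝ)) h) 1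
  simp [pt] at h0 h1
  constructor <;> [exact_mod_cast h0; exact_mod_cast h1]

lemma dist_pt_ge {a b c d : ℕ} (h : ¬(a = c ∧ b = d)) : 2 ≤ dist (pt a b) (pt c d) := by
  rw [dist_pt]
  have h1 : (4:ℝ) ≤ (2*(a:ℝ) - 2*c)^2 + (2*(b:ℝ) - 2*d)^2 := by
    have : (1:ℤ) ≤ ((a:ℤ) - c)^2 + ((b:ℤ) - d)^2 := by
      rcases Nat.lt_or_ge a c with h' | h'
      · nlinarith [sq_nonneg ((b:ℤ) - d), sq_nonneg ((a:ℤ) - c),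
          show (a:ℤ) - c ≤ -1 by omega]
      · rcases Nat.lt_or_ge c a with h'' | h''
        · nlinarith [sq_nonneg ((b:ℤ) - d), show (1:ℤ) ≤ (a:ℤ) - c by omega]
        · have hac : a = c := le_antisymm h'' h'
          have hbd : b ≠ d := fun hb => h ⟨hac, hb⟩
          rcases show (b:ℤ) - d ≤ -1 ∨ (1:ℤ) ≤ (b:ℤ) - d by omega with hb | hb <;>
            nlinarith [sq_nonneg ((a:ℤ) - c)]
    have : (1:ℝ) ≤ (((a:ℤ) - c)^2 + ((b:ℤ) - d)^2 : ℤ) := by exact_mod_cast this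
    push_cast at this
    nlinarith
  calc (2:ℝ) = Real.sqrt 4 := by
        rw [show (4:ℝ) = 2^2 by norm_num, Real.sqrt_sq (by norm_num : (0:ℝ) ≤ 2)]
    _ ≤ _ := Real.sqrt_le_sqrt h1

lemma odd_ge_one (z : ℤ) (hz : z % 2 = 1 ∨ z % 2 = -1) : (1:ℝ) ≤ |(z:ℝ)| := by
  rw [← Int.cast_abs]
  exact_mod_cast Int.one_le_abs (by omega)

lemma sep_main (a b c d e f : ℕ) (hadj : Adj ((a,b),(c,d))) (p : EuclideanSpace ℝ (Fin 2))
    (hp : (inner ℝ (p - midpoint ℝ (pt a b) (pt c d)) (pt a b - pt c d) : ℝ) = 0)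
    (hball : p ∈ ball (pt e f) 1) : False := by
  simp only [PiLp.inner_apply, RCLike.inner_apply, conj_trivial, Fin.sum_univ_two,
    PiLp.sub_apply, midpoint_eq_smul_add, invOf_eq_inv, PiLp.smul_apply, PiLp.add_apply,
    smul_eq_mul, pt_apply0, pt_apply1] at hp
  rw [mem_ball] at hball
  have hadj' : (a = c ∧ (b = d + 1 ∨ d = b + 1)) ∨ (b = d ∧ (a = c + 1 ∨ c = a + 1)) := hadj
  clear hadj
  rcases hadj' with ⟨h1, h2⟩ | ⟨h1, h2⟩
  · have hcoef : (2*(b:ℝ) - 2*d) ≠ 0 := by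
      have hbd : b ≠ d := by omega
      intro h
      exact hbd (by exact_mod_cast (by linarith : (b:ℝ) = d))
    have hp1 : p 1 = b + d := by
      subst h1
      have h' : (p 1 - ((b:ℝ) + d)) * (2*(b:ℝ) - 2*d) = 0 := by linarith [hp]
      rcases mul_eq_zero.mp h' with h'' | h''
      · linarith
      · exact absurd h'' hcoef
    have hle := coord_le p (pt e f) 1
    rw [pt_apply1, hp1] at hle
    have hge : (1:ℝ) ≤ |(b:ℝ) + d - 2*f| := by
      have : ((b:ℝ) + d - 2*f) = (((b:ℤ) + d - 2*f : ℤ) : ℝ) := by push_cast; ring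
      rw [this]
      exact odd_ge_one _ (by omega)
    linarith
  · have hcoef : (2*(a:ℝ) - 2*c) ≠ 0 := by
      have hac : a ≠ c := by omega
      intro h
      exact hac (by exact_mod_cast (by linarith : (a:ℝ) = c))
    have hp0 : p 0 = a + c := by
      subst h1
      have h' : (p 0 - ((a:ℝ) + c)) * (2*(a:ℝ) - 2*c) = 0 := by linarith [hp]
      rcases mul_eq_zero.mp h' with h'' | h''
      · linarith
      · exact absurd h'' hcoef
    have hle := coord_le p (pt e f) 0
    rw [pt_apply0, hp0] at hle
    have hge : (1:ℝ) ≤ |(a:ℝ) + c - 2*e| := by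
      have : ((a:ℝ) + c - 2*e) = (((a:ℤ) + c - 2*e : ℤ) : ℝ) := by push_cast; ring
      rw [this]
      exact odd_ge_one _ (by omega)
    linarith

lemma card_adj (k : ℕ) :
    (((range k ×ˢ range k) ×ˢ (range k ×ˢ range k)).filter Adj).card = 4 * (k * (k-1)) := by
  classical
  set D : Finset (ℕ × ℕ) := range k ×ˢ range (k-1) with hD
  set f1 : ℕ × ℕ → (ℕ × ℕ) × (ℕ × ℕ) := fun q => ((q.1, q.2), (q.1, q.2+1)) with hf1
  set f2 : ℕ × ℕ → (ℕ × ℕ) × (ℕ × ℕ) := fun q => ((q.1, q.2+1), (q.1, q.2)) with hf2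
  set f3 : ℕ × ℕ → (ℕ × ℕ) × (ℕ × ℕ) := fun q => ((q.2, q.1), (q.2+1, q.1)) with hf3
  set f4 : ℕ × ℕ → (ℕ × ℕ) × (ℕ × ℕ) := fun q => ((q.2+1, q.1), (q.2, q.1)) with hf4
  have hT : ((range k ×ˢ range k) ×ˢ (range k ×ˢ range k)).filter Adj
      = D.image f1 ∪ D.image f2 ∪ D.image f3 ∪ D.image f4 := by
    ext ⟨⟨a,b⟩,⟨c,d⟩⟩
    simp only [mem_filter, mem_product, mem_range, mem_union, mem_image, hD, hf1, hf2, hf3, hf4,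
      Adj, Prod.mk.injEq, Prod.exists]
    constructor
    · rintro ⟨⟨⟨ha, hb⟩, hc, hd⟩, hadj⟩
      rcases hadj with ⟨h1, h2 | h2⟩ | ⟨h1, h2 | h2⟩
      · refine Or.inl (Or.inl (Or.inr ⟨a, d, ?_, ?_⟩)) <;> omega
      · refine Or.inl (Or.inl (Or.inl ⟨a, b, ?_, ?_⟩)) <;> omega
      · refine Or.inr ⟨b, c, ?_, ?_⟩ <;> omega
      · refine Or.inl (Or.inr ⟨b, a, ?_, ?_⟩) <;> omega
    · rintro (((⟨x, y, hxy, e⟩ | ⟨x, y, hxy, e⟩) | ⟨x, y, hxy, e⟩) | ⟨x, y, hxy, e⟩) <;>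
      · constructor
        · omega
        · omega
  rw [hT]
  have hcD : D.card = k * (k-1) := by simp [hD]
  have inj1 : Set.InjOn f1 D := by
    intro p _ q _ h; simp [hf1, Prod.ext_iff] at h; exact Prod.ext (by omega) (by omega)
  have inj2 : Set.InjOn f2 D := by
    intro p _ q _ h; simp [hf2, Prod.ext_iff] at h; exact Prod.ext (by omega) (by omega)
  have inj3 : Set.InjOn f3 D := by
    intro p _ q _ h; simp [hf3, Prod.ext_iff] at h; exact Prod.ext (by omega) (by omega)
  have inj4 : Set.InjOn f4 D := by
    intro p _ q _ h; simp [hf4, Prod.ext_iff] at h; exact Prod.ext (by omega) (by omega)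
  have d12 : Disjoint (D.image f1) (D.image f2) := by
    simp only [disjoint_left, mem_image]
    rintro p ⟨x, hx, rfl⟩ ⟨y, hy, e⟩
    simp [hf1, hf2, Prod.ext_iff] at e; omega
  have d13 : Disjoint (D.image f1) (D.image f3) := by
    simp only [disjoint_left, mem_image]
    rintro p ⟨x, hx, rfl⟩ ⟨y, hy, e⟩
    simp [hf1, hf3, Prod.ext_iff] at e; omega
  have d14 : Disjoint (D.image f1) (D.image f4) := by
    simp only [disjoint_left, mem_image]
    rintro p ⟨x, hx, rfl⟩ ⟨y, hy, e⟩
    simp [hf1, hf4, Prod.ext_iff] at e; omega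
  have d23 : Disjoint (D.image f2) (D.image f3) := by
    simp only [disjoint_left, mem_image]
    rintro p ⟨x, hx, rfl⟩ ⟨y, hy, e⟩
    simp [hf2, hf3, Prod.ext_iff] at e; omega
  have d24 : Disjoint (D.image f2) (D.image f4) := by
    simp only [disjoint_left, mem_image]
    rintro p ⟨x, hx, rfl⟩ ⟨y, hy, e⟩
    simp [hf2, hf4, Prod.ext_iff] at e; omega
  have d34 : Disjoint (D.image f3) (D.image f4) := by
    simp only [disjoint_left, mem_image]
    rintro p ⟨x, hx, rfl⟩ ⟨y, hy, e⟩
    simp [hf3, hf4, Prod.ext_iff] at e; omega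
  rw [card_union_of_disjoint (by
      refine Finset.disjoint_union_left.mpr ⟨Finset.disjoint_union_left.mpr ⟨d14, d24⟩, d34⟩),
    card_union_of_disjoint (Finset.disjoint_union_left.mpr ⟨d13, d23⟩),
    card_union_of_disjoint d12,
    Finset.card_image_of_injOn inj1, Finset.card_image_of_injOn inj2,
    Finset.card_image_of_injOn inj3, Finset.card_image_of_injOn inj4, hcD]
  ring

theorem stmt3 (k : ℕ) (hk : 1 ≤ k)
    (S : Finset (EuclideanSpace ℝ (Fin 2)))
    (hS : S = (Finset.range k ×ˢ Finset.range k).image fun p =>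
      (WithLp.equiv 2 (Fin 2 → ℝ)).symm ![2 * (p.1 : ℝ), 2 * (p.2 : ℝ)]) :
    S.card = k ^ 2 ∧ IsPacking ((S : Finset (EuclideanSpace ℝ (Fin 2))) : Set (EuclideanSpace ℝ (Fin 2))) ∧ TotallySeparable ((S : Finset (EuclideanSpace ℝ (Fin 2))) : Set (EuclideanSpace ℝ (Fin 2))) ∧
      tangencies S = 2 * k * (k - 1) ∧
      (2 * k * (k - 1) : ℝ) = 2 * ((k ^ 2 : ℕ) - Real.sqrt (k ^ 2 : ℕ)) := by
  have hmemS : ∀ x : EuclideanSpace ℝ (Fin 2), x ∈ S ↔ ∃ a b : ℕ, a < k ∧ b < k ∧ x = pt a b := by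
    intro x
    simp only [hS, mem_image, mem_product, mem_range, Prod.exists]
    constructor
    · rintro ⟨a, b, ⟨ha, hb⟩, rfl⟩
      exact ⟨a, b, ha, hb, rfl⟩
    · rintro ⟨a, b, ha, hb, rfl⟩
      exact ⟨a, b, ⟨ha, hb⟩, rfl⟩
  refine ⟨?_, ?_, ?_, ?_, ?_⟩
  · rw [hS, Finset.card_image_of_injOn, card_product, card_range, sq]
    intro p _ q _ h
    have h' : pt p.1 p.2 = pt q.1 q.2 := h
    obtain ⟨e1, e2⟩ := pt_inj_pair h'
    exact Prod.ext e1 e2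
  · intro x hx y hy hxy
    obtain ⟨a, b, _, _, rfl⟩ := (hmemS x).mp hx
    obtain ⟨c, d, _, _, rfl⟩ := (hmemS y).mp hy
    apply dist_pt_ge
    rintro ⟨rfl, rfl⟩
    exact hxy rfl
  · intro x hx y hy hxy z hz
    obtain ⟨a, b, _, _, rfl⟩ := (hmemS x).mp hx
    obtain ⟨c, d, _, _, rfl⟩ := (hmemS y).mp hy
    obtain ⟨e, f, _, _, rfl⟩ := (hmemS z).mp hz
    have hadj : Adj ((a,b),(c,d)) := (dist_pt_eq_two a b c d).mp hxy
    rw [Set.eq_empty_iff_forall_notMem]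
    rintro p ⟨hp1, hp2⟩
    exact sep_main a b c d e f hadj p hp1 hp2
  · have hcard : (((range k ×ˢ range k) ×ˢ (range k ×ˢ range k)).filter Adj).card
        = (S.offDiag.filter fun p => dist p.1 p.2 = 2).card := by
      refine Finset.card_bij (fun q _ => (pt q.1.1 q.1.2, pt q.2.1 q.2.2)) ?_ ?_ ?_
      · rintro ⟨⟨a,b⟩,⟨c,d⟩⟩ hq
        simp only [mem_filter, mem_product, mem_range] at hq
        obtain ⟨⟨⟨ha, hb⟩, hc, hd⟩, hadj⟩ := hq
        have hadj' : (a = c ∧ (b = d + 1 ∨ d = b + 1)) ∨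
            (b = d ∧ (a = c + 1 ∨ c = a + 1)) := hadj
        rw [mem_filter, Finset.mem_offDiag]
        refine ⟨⟨(hmemS _).mpr ⟨a, b, ha, hb, rfl⟩, (hmemS _).mpr ⟨c, d, hc, hd, rfl⟩, ?_⟩, ?_⟩
        · intro h
          obtain ⟨e1, e2⟩ := pt_inj_pair h
          dsimp only at e1 e2
          omega
        · exact (dist_pt_eq_two a b c d).mpr hadj
      · rintro ⟨⟨a,b⟩,⟨c,d⟩⟩ _ ⟨⟨a',b'⟩,⟨c',d'⟩⟩ _ h
        rw [Prod.ext_iff] at h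
        obtain ⟨e1, e2⟩ := pt_inj_pair h.1
        obtain ⟨e3, e4⟩ := pt_inj_pair h.2
        simp only [Prod.mk.injEq]
        exact ⟨⟨e1, e2⟩, e3, e4⟩
      · intro pq hpq
        rw [mem_filter, Finset.mem_offDiag] at hpq
        obtain ⟨⟨h1, h2, hne⟩, hdist⟩ := hpq
        obtain ⟨a, b, ha, hb, hx⟩ := (hmemS _).mp h1
        obtain ⟨c, d, hc, hd, hy⟩ := (hmemS _).mp h2
        refine ⟨((a,b),(c,d)), ?_, ?_⟩
        · simp only [mem_filter, mem_product, mem_range]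
          exact ⟨⟨⟨ha, hb⟩, hc, hd⟩,
            (dist_pt_eq_two a b c d).mp (by rw [← hx, ← hy]; exact hdist)⟩
        · rw [Prod.ext_iff]
          exact ⟨hx.symm, hy.symm⟩
    unfold tangencies
    rw [← hcard, card_adj k, show 2 * k * (k - 1) = 2 * (k * (k-1)) from by ring]
    generalize k * (k - 1) = m
    omega
  · have hsq : Real.sqrt (((k:ℕ)^2 : ℕ) : ℝ) = k := by
      push_cast
      exact Real.sqrt_sq (by positivity)
    rw [hsq]
    push_cast
    ring
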